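/- Fix h > 0 and Γ ≥ 0, and let p = ln(2 cosh(βΓ)). The supremum over y ∈ [0,1] of F(y) = β·h·γ(y) + (1−y)·p, where γ : [0,1] → [0,1] is the inverse of γ⁻¹(x) = ((1−x)/(2 ln 2))ln(1−x) + ((1+x)/(2 ln 2))ln(1+x), is attained at the unique point y* = k(p/(βh)), where k is the inverse of γ′. -/

import Mathlib

open Real Set

/-- `γ⁻¹(x) = ((1−x)/(2 ln 2))·ln(1−x) + ((1+x)/(2 ln 2))·ln(1+x)`. -/
noncomputable def gammaInv (x : ℝ) : ℝ :=
  (1 - x) / (2 * Real.log 2) * Real.log (1 - x)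
    + (1 + x) / (2 * Real.log 2) * Real.log (1 + x)

/-- The inverse `k` of `γ'`: `k(0) = 1`,
`k(x) = (1/x)·tanh((ln 2)/x) − (1/ln 2)·ln cosh((ln 2)/x)` for `x > 0`. -/
noncomputable def kFun (x : ℝ) : ℝ :=
  if x = 0 then 1
  else (1 / x) * Real.tanh (Real.log 2 / x) - (1 / Real.log 2) * Real.log (Real.cosh (Real.log 2 / x))

lemma gammaInv_eq (x : ℝ) : gammaInv x =
    ((1 - x) * Real.log (1 - x) + (1 + x) * Real.log (1 + x)) / (2 * Real.log 2) := by
  unfold gammaInv; ring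

lemma gammaInv_cont : Continuous gammaInv := by
  have h1 : Continuous fun x : ℝ => (1 - x) * Real.log (1 - x) :=
    Real.continuous_mul_log.comp (continuous_const.sub continuous_id)
  have h2 : Continuous fun x : ℝ => (1 + x) * Real.log (1 + x) :=
    Real.continuous_mul_log.comp (continuous_const.add continuous_id)
  have : gammaInv = fun x =>
      ((1 - x) * Real.log (1 - x) + (1 + x) * Real.log (1 + x)) / (2 * Real.log 2) := by
    funext x; exact gammaInv_eq x
  rw [this]; exact (h1.add h2).div_const _

lemma gammaInv_zero : gammaInv 0 = 0 := by simp [gammaInv]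

lemma gammaInv_one : gammaInv 1 = 1 := by
  have hL : Real.log 2 ≠ 0 := ne_of_gt (Real.log_pos (by norm_num))
  simp only [gammaInv]
  norm_num
  field_simp

lemma gammaInv_hasDeriv {x : ℝ} (h1 : -1 < x) (h2 : x < 1) :
    HasDerivAt gammaInv ((Real.log (1 + x) - Real.log (1 - x)) / (2 * Real.log 2)) x := by
  have d1 : HasDerivAt (fun x : ℝ => (1 - x) * Real.log (1 - x))
      ((Real.log (1 - x) + 1) * (-1)) x := by
    have := (Real.hasDerivAt_mul_log (x := 1 - x) (by linarith)).comp x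
      (((hasDerivAt_id x).const_sub 1 : HasDerivAt (fun y : ℝ => 1 - y) (-1) x))
    simpa [Function.comp_def] using this
  have d2 : HasDerivAt (fun x : ℝ => (1 + x) * Real.log (1 + x))
      ((Real.log (1 + x) + 1) * 1) x := by
    have := (Real.hasDerivAt_mul_log (x := 1 + x) (by linarith)).comp x
      (((hasDerivAt_id x).const_add 1 : HasDerivAt (fun y : ℝ => 1 + y) 1 x))
    simpa [Function.comp_def] using this
  have hd := (d1.add d2).div_const (2 * Real.log 2)
  have heq : gammaInv = fun x =>
      ((1 - x) * Real.log (1 - x) + (1 + x) * Real.log (1 + x)) / (2 * Real.log 2) := by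
    funext x; exact gammaInv_eq x
  rw [heq]
  exact hd.congr_deriv (by ring)

lemma one_sub_tanh (t : ℝ) : 1 - Real.tanh t = Real.exp (-t) / Real.cosh t := by
  have hc : Real.cosh t ≠ 0 := ne_of_gt (Real.cosh_pos t)
  rw [Real.tanh_eq_sinh_div_cosh]
  field_simp
  rw [Real.cosh_eq, Real.sinh_eq]; ring

lemma one_add_tanh (t : ℝ) : 1 + Real.tanh t = Real.exp t / Real.cosh t := by
  have hc : Real.cosh t ≠ 0 := ne_of_gt (Real.cosh_pos t)
  rw [Real.tanh_eq_sinh_div_cosh]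
  field_simp
  rw [Real.cosh_eq, Real.sinh_eq]; ring

lemma log_one_sub_tanh (t : ℝ) :
    Real.log (1 - Real.tanh t) = -t - Real.log (Real.cosh t) := by
  rw [one_sub_tanh, Real.log_div (Real.exp_ne_zero _) (ne_of_gt (Real.cosh_pos t)),
    Real.log_exp]

lemma log_one_add_tanh (t : ℝ) :
    Real.log (1 + Real.tanh t) = t - Real.log (Real.cosh t) := by
  rw [one_add_tanh, Real.log_div (Real.exp_ne_zero _) (ne_of_gt (Real.cosh_pos t)),
    Real.log_exp]

lemma gammaInv_tanh (t : ℝ) :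
    gammaInv (Real.tanh t) = (t * Real.tanh t - Real.log (Real.cosh t)) / Real.log 2 := by
  have hL : Real.log 2 ≠ 0 := ne_of_gt (Real.log_pos (by norm_num))
  rw [gammaInv_eq, log_one_sub_tanh, log_one_add_tanh, one_sub_tanh, one_add_tanh,
    Real.tanh_eq_sinh_div_cosh]
  have hc : Real.cosh t ≠ 0 := ne_of_gt (Real.cosh_pos t)
  rw [Real.cosh_eq, Real.sinh_eq] at *
  field_simp
  ring

lemma kFun_eq {a : ℝ} (ha : a ≠ 0) :
    kFun a = gammaInv (Real.tanh (Real.log 2 / a)) := by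
  have hL : Real.log 2 ≠ 0 := ne_of_gt (Real.log_pos (by norm_num))
  rw [kFun, if_neg ha, gammaInv_tanh]
  field_simp

/-- For `h > 0`, `Γ ≥ 0`, `β > 0` and `p = ln(2 cosh(βΓ))`, the supremum over `y ∈ [0,1]` of
`F(y) = βhγ(y) + (1−y)p` is attained at the unique point `y* = k(p/(βh))`. -/
theorem sup_attained_at_kFun
    (β h Γ : ℝ) (hβ : 0 < β) (hh : 0 < h) (hΓ : 0 ≤ Γ)
    (γ : ℝ → ℝ)
    (hγ₁ : ∀ x ∈ Icc (0 : ℝ) 1, γ (gammaInv x) = x)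
    (hγ₂ : ∀ y ∈ Icc (0 : ℝ) 1, gammaInv (γ y) = y) :
    let p : ℝ := Real.log (2 * Real.cosh (β * Γ))
    let F : ℝ → ℝ := fun y => β * h * γ y + (1 - y) * p
    let ystar : ℝ := kFun (p / (β * h))
    ystar ∈ Icc (0 : ℝ) 1 ∧
    (∀ y ∈ Icc (0 : ℝ) 1, F y ≤ F ystar) ∧
    (∀ y ∈ Icc (0 : ℝ) 1, (∀ z ∈ Icc (0 : ℝ) 1, F z ≤ F y) → y = ystar) := by
  intro p F ystar
  have hL : 0 < Real.log 2 := Real.log_pos (by norm_num)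
  have hp : 0 < p := by
    have h1 : (1 : ℝ) ≤ Real.cosh (β * Γ) := Real.one_le_cosh _
    have : (2 : ℝ) ≤ 2 * Real.cosh (β * Γ) := by linarith
    calc (0 : ℝ) < Real.log 2 := hL
    _ ≤ p := Real.log_le_log (by norm_num) this
  have hbh : 0 < β * h := mul_pos hβ hh
  set a : ℝ := p / (β * h) with ha_def
  have ha0 : 0 < a := div_pos hp hbh
  set t : ℝ := Real.log 2 / a with ht_def
  have ht : 0 < t := div_pos hL ha0
  set xs : ℝ := Real.tanh t with hxs_def
  have hxs0 : 0 < xs := by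
    rw [hxs_def, Real.tanh_eq_sinh_div_cosh]
    exact div_pos (Real.sinh_pos_iff.mpr ht) (Real.cosh_pos t)
  have hxs1 : xs < 1 := by
    have := one_sub_tanh t
    have hpos : 0 < Real.exp (-t) / Real.cosh t :=
      div_pos (Real.exp_pos _) (Real.cosh_pos t)
    rw [hxs_def]; linarith
  have hxsIcc : xs ∈ Icc (0 : ℝ) 1 := ⟨hxs0.le, hxs1.le⟩
  have hys : ystar = gammaInv xs := kFun_eq (ne_of_gt ha0)
  -- strict monotonicity of gammaInv on [0,1]
  have mono : StrictMonoOn gammaInv (Icc (0 : ℝ) 1) := by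
    apply strictMonoOn_of_deriv_pos (convex_Icc 0 1) gammaInv_cont.continuousOn
    intro x hx
    rw [interior_Icc] at hx
    rw [(gammaInv_hasDeriv (by linarith [hx.1]) hx.2).deriv]
    have : Real.log (1 - x) < Real.log (1 + x) :=
      Real.log_lt_log (by linarith [hx.2]) (by linarith [hx.1])
    have h2L : 0 < 2 * Real.log 2 := by linarith
    exact div_pos (by linarith) h2L
  have hysIcc : ystar ∈ Icc (0 : ℝ) 1 := by
    rw [hys]
    constructor
    · have := mono (left_mem_Icc.mpr (by norm_num)) hxsIcc hxs0
      rw [gammaInv_zero] at this; linarith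
    · have := mono hxsIcc (right_mem_Icc.mpr (by norm_num)) hxs1
      rw [gammaInv_one] at this; linarith
  -- the auxiliary function G
  set G : ℝ → ℝ := fun x => a * gammaInv x - x with hG_def
  have contG : Continuous G := (continuous_const.mul gammaInv_cont).sub continuous_id
  have derivG : ∀ x : ℝ, -1 < x → x < 1 → HasDerivAt G
      (a * ((Real.log (1 + x) - Real.log (1 - x)) / (2 * Real.log 2)) - 1) x := by
    intro x h1 h2
    have := ((gammaInv_hasDeriv h1 h2).const_mul a).sub (hasDerivAt_id x)
    exact this
  have h2t : Real.log (1 + xs) - Real.log (1 - xs) = 2 * t := by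
    rw [hxs_def, log_one_add_tanh, log_one_sub_tanh]; ring
  have hat : a * t = Real.log 2 := by
    rw [ht_def]; field_simp
  have h2L : 0 < 2 * Real.log 2 := by linarith
  -- derivative sign
  have dneg : ∀ x ∈ Ioo (0 : ℝ) xs,
      a * ((Real.log (1 + x) - Real.log (1 - x)) / (2 * Real.log 2)) - 1 < 0 := by
    intro x hx
    have hlt : Real.log (1 + x) - Real.log (1 - x) < 2 * t := by
      have l1 : Real.log (1 + x) < Real.log (1 + xs) :=
        Real.log_lt_log (by linarith [hx.1]) (by linarith [hx.2])
      have l2 : Real.log (1 - xs) < Real.log (1 - x) :=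
        Real.log_lt_log (by linarith) (by linarith [hx.2])
      linarith [h2t]
    have hAA : a * (Real.log (1 + x) - Real.log (1 - x)) < 2 * Real.log 2 := by
      have := mul_lt_mul_of_pos_left hlt ha0
      nlinarith [hat]
    have := (div_lt_one h2L).mpr hAA
    calc a * ((Real.log (1 + x) - Real.log (1 - x)) / (2 * Real.log 2)) - 1
        = a * (Real.log (1 + x) - Real.log (1 - x)) / (2 * Real.log 2) - 1 := by ring
      _ < 0 := by linarith
  have dpos : ∀ x ∈ Ioo xs (1 : ℝ),
      0 < a * ((Real.log (1 + x) - Real.log (1 - x)) / (2 * Real.log 2)) - 1 := by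
    intro x hx
    have hlt : 2 * t < Real.log (1 + x) - Real.log (1 - x) := by
      have l1 : Real.log (1 + xs) < Real.log (1 + x) :=
        Real.log_lt_log (by linarith) (by linarith [hx.1])
      have l2 : Real.log (1 - x) < Real.log (1 - xs) :=
        Real.log_lt_log (by linarith [hx.2]) (by linarith [hx.1])
      linarith [h2t]
    have hAA : 2 * Real.log 2 < a * (Real.log (1 + x) - Real.log (1 - x)) := by
      have := mul_lt_mul_of_pos_left hlt ha0
      nlinarith [hat]
    have := (one_lt_div h2L).mpr hAA
    calc (0 : ℝ) < a * (Real.log (1 + x) - Real.log (1 - x)) / (2 * Real.log 2) - 1 := by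
          linarith
      _ = a * ((Real.log (1 + x) - Real.log (1 - x)) / (2 * Real.log 2)) - 1 := by ring
  have anti : StrictAntiOn G (Icc (0 : ℝ) xs) := by
    apply strictAntiOn_of_deriv_neg (convex_Icc 0 xs) contG.continuousOn
    intro x hx
    rw [interior_Icc] at hx
    rw [(derivG x (by linarith [hx.1]) (by linarith [hx.2, hxs1])).deriv]
    exact dneg x hx
  have monoG : StrictMonoOn G (Icc xs (1 : ℝ)) := by
    apply strictMonoOn_of_deriv_pos (convex_Icc xs 1) contG.continuousOn
    intro x hx
    rw [interior_Icc] at hx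
    rw [(derivG x (by linarith [hx.1, hxs0]) hx.2).deriv]
    exact dpos x hx
  have keyG : ∀ x ∈ Icc (0 : ℝ) 1, x ≠ xs → G xs < G x := by
    intro x hx hne
    rcases lt_or_gt_of_ne hne with hlt | hgt
    · exact anti ⟨hx.1, hlt.le⟩ ⟨hxs0.le, le_refl xs⟩ hlt
    · exact monoG ⟨le_refl xs, hxs1.le⟩ ⟨hgt.le, hx.2⟩ hgt
  have keyG' : ∀ x ∈ Icc (0 : ℝ) 1, G xs ≤ G x := by
    intro x hx
    by_cases hne : x = xs
    · rw [hne]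
    · exact (keyG x hx hne).le
  -- surjectivity of gammaInv onto [0,1]
  have surj : ∀ y ∈ Icc (0 : ℝ) 1, ∃ x ∈ Icc (0 : ℝ) 1, gammaInv x = y := by
    intro y hy
    have him := intermediate_value_Icc (by norm_num : (0 : ℝ) ≤ 1) gammaInv_cont.continuousOn
    rw [gammaInv_zero, gammaInv_one] at him
    obtain ⟨x, hxI, hxy⟩ := him hy
    exact ⟨x, hxI, hxy⟩
  -- value of F
  have hpa : p = β * h * a := by
    rw [ha_def]; field_simp
  have hFval : ∀ x ∈ Icc (0 : ℝ) 1, F (gammaInv x) = p - β * h * G x := by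
    intro x hx
    show β * h * γ (gammaInv x) + (1 - gammaInv x) * p = p - β * h * G x
    rw [hγ₁ x hx, hG_def]
    simp only
    rw [hpa]
    ring
  have hFystar : F ystar = p - β * h * G xs := by
    rw [hys]; exact hFval xs hxsIcc
  refine ⟨hysIcc, ?_, ?_⟩
  · intro y hy
    obtain ⟨x, hxI, hxy⟩ := surj y hy
    rw [← hxy, hFval x hxI, hFystar]
    have := mul_le_mul_of_nonneg_left (keyG' x hxI) hbh.le
    linarith
  · intro y hy hmax
    obtain ⟨x, hxI, hxy⟩ := surj y hy
    have h1 : F ystar ≤ F y := hmax ystar hysIcc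
    rw [← hxy, hFval x hxI, hFystar] at h1
    have hGle : G x ≤ G xs := by
      have := (mul_le_mul_iff_right₀ hbh).mp (by linarith : β * h * G x ≤ β * h * G xs)
      exact this
    have hxeq : x = xs := by
      by_contra hne
      exact absurd hGle (not_le.mpr (keyG x hxI hne))
    rw [← hxy, hxeq, ← hys]
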